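/- Let A and B be unital complex Banach algebras, let 𝔄 and 𝔅 be open subgroups of A⁻¹ and B⁻¹ respectively, and suppose there exists a surjective isometry T : 𝔄 → 𝔅. If B is semisimple, then A is semisimple. -/

import Mathlib

open Metric Set Bornology

/-- The set of units of a ring. -/
def uSet (R : Type*) [Monoid R] : Set R := {x : R | IsUnit x}

lemma mem_uSet_iff {R : Type*} [Monoid R] {x : R} : x ∈ uSet R ↔ IsUnit x := Iff.rfl

section UnitsComp

variable {R : Type*} [NormedRing R] [NormedAlgebra ℂ R] [CompleteSpace R]



lemma mem_princComp_of_norm_lt {z : R} (hz : ‖z‖ < 1) :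
    (1 + z) ∈ connectedComponentIn (uSet R) (1 : R) := by
  have hsub : ((fun t : ℝ => 1 + t • z) '' Set.Icc 0 1) ⊆ (uSet R) := by
    rintro _ ⟨t, ht, rfl⟩
    have h1 : ‖t • z‖ < 1 := by
      rw [norm_smul, Real.norm_eq_abs, abs_of_nonneg ht.1]
      calc t * ‖z‖ ≤ 1 * ‖z‖ := by
            apply mul_le_mul_of_nonneg_right ht.2 (norm_nonneg z)
        _ < 1 := by simpa using hz
    have := (Units.oneSub (-(t • z)) (by simpa using h1)).isUnit
    simpa [sub_neg_eq_add, mem_uSet_iff] using this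
  have hpc : IsPreconnected ((fun t : ℝ => 1 + t • z) '' Set.Icc 0 1) :=
    isPreconnected_Icc.image _ (by fun_prop)
  have h1mem : (1 : R) ∈ ((fun t : ℝ => 1 + t • z) '' Set.Icc 0 1) :=
    ⟨0, by simp, by simp⟩
  have := hpc.subset_connectedComponentIn h1mem hsub
  exact this ⟨1, by simp, by simp⟩

variable (𝔅 : Set R)
variable (h𝔅unit : ∀ b ∈ 𝔅, IsUnit b) (h𝔅one : (1 : R) ∈ 𝔅)
    (h𝔅mul : ∀ a ∈ 𝔅, ∀ b ∈ 𝔅, a * b ∈ 𝔅)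
    (h𝔅inv : ∀ b ∈ 𝔅, Ring.inverse b ∈ 𝔅) (h𝔅open : IsOpen 𝔅)

include h𝔅unit h𝔅one h𝔅mul h𝔅inv h𝔅open in
lemma isOpen_units_diff : IsOpen ((uSet R) \ 𝔅) := by
  rw [isOpen_iff_forall_mem_open]
  rintro v ⟨hvu, hvn⟩
  obtain ⟨u, rfl⟩ := hvu
  refine ⟨{x : R | (↑u⁻¹ * x) ∈ 𝔅}, ?_, (h𝔅open.preimage (by fun_prop) : _), by simp [h𝔅one]⟩
  rintro x hx
  have hxu : IsUnit x := by
    have : (u : R) * (↑u⁻¹ * x) = x := by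
      rw [← mul_assoc]; simp
    exact this ▸ u.isUnit.mul (h𝔅unit _ hx)
  refine ⟨hxu, fun hxB => hvn ?_⟩
  have hinv := h𝔅inv _ hx
  have hui : IsUnit ((↑u⁻¹ : R) * x) := h𝔅unit _ hx
  obtain ⟨w, hw⟩ := hui
  rw [← hw, Ring.inverse_unit] at hinv
  have : x * ((w⁻¹ : Rˣ) : R) = ↑u := by
    have hxw : x = u * w := by rw [hw, ← mul_assoc]; simp
    rw [hxw, mul_assoc]; simp
  exact this ▸ h𝔅mul _ hxB _ hinv

include h𝔅unit h𝔅one h𝔅mul h𝔅inv h𝔅open in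
lemma princComp_subset : connectedComponentIn (uSet R) (1 : R) ⊆ 𝔅 := by
  set C := connectedComponentIn (uSet R) (1 : R) with hC
  have hpc : IsPreconnected C := isPreconnected_connectedComponentIn
  have hsub : C ⊆ (uSet R) := connectedComponentIn_subset _ _
  by_contra hnot
  have hne : (C ∩ ((uSet R) \ 𝔅)).Nonempty := by
    rw [Set.not_subset] at hnot
    obtain ⟨x, hxC, hxB⟩ := hnot
    exact ⟨x, hxC, hsub hxC, hxB⟩
  have hcov : C ⊆ 𝔅 ∪ ((uSet R) \ 𝔅) := fun x hx => by
    by_cases h : x ∈ 𝔅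
    · exact Or.inl h
    · exact Or.inr ⟨hsub hx, h⟩
  have h1 : (C ∩ 𝔅).Nonempty := ⟨1, mem_connectedComponentIn (show (1:R) ∈ uSet R from isUnit_one), h𝔅one⟩
  obtain ⟨x, hxC, hxB, _, hxnB⟩ :=
    hpc 𝔅 ((uSet R) \ 𝔅) h𝔅open (isOpen_units_diff 𝔅 h𝔅unit h𝔅one h𝔅mul h𝔅inv h𝔅open) hcov h1 hne
  exact hxnB hxB

lemma princComp_mul {v x : R} (hv : v ∈ connectedComponentIn (uSet R) (1 : R))
    (hx : x ∈ connectedComponentIn (uSet R) (1 : R)) :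
    v * x ∈ connectedComponentIn (uSet R) (1 : R) := by
  have hvu : IsUnit v := mem_uSet_iff.mp (connectedComponentIn_subset (uSet R) 1 hv)
  have hsub : ((v * ·) '' connectedComponentIn (uSet R) (1 : R)) ⊆ (uSet R) := by
    rintro _ ⟨y, hy, rfl⟩
    exact hvu.mul (mem_uSet_iff.mp (connectedComponentIn_subset (uSet R) 1 hy))
  have hpc : IsPreconnected ((v * ·) '' connectedComponentIn (uSet R) (1 : R)) :=
    isPreconnected_connectedComponentIn.image _ (by fun_prop)
  have hvmem : v ∈ ((v * ·) '' connectedComponentIn (uSet R) (1 : R)) :=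
    ⟨1, mem_connectedComponentIn (show (1:R) ∈ uSet R from isUnit_one), by simp⟩
  have hsub2 := hpc.subset_connectedComponentIn hvmem hsub
  rw [← connectedComponentIn_eq hv] at hsub2
  exact hsub2 ⟨x, hx, rfl⟩

lemma princComp_inv {v : R} (hv : v ∈ connectedComponentIn (uSet R) (1 : R)) :
    Ring.inverse v ∈ connectedComponentIn (uSet R) (1 : R) := by
  have hcont : ContinuousOn (Ring.inverse : R → R) (uSet R) := by
    intro x hx
    obtain ⟨u, rfl⟩ := (hx : IsUnit x)
    exact (NormedRing.inverse_continuousAt u).continuousWithinAt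
  have hpc : IsPreconnected ((Ring.inverse : R → R) '' connectedComponentIn (uSet R) (1 : R)) :=
    isPreconnected_connectedComponentIn.image _
      (hcont.mono (connectedComponentIn_subset _ _))
  have hsub : ((Ring.inverse : R → R) '' connectedComponentIn (uSet R) (1 : R)) ⊆ (uSet R) := by
    rintro _ ⟨y, hy, rfl⟩
    obtain ⟨u, rfl⟩ := mem_uSet_iff.mp (connectedComponentIn_subset (uSet R) 1 hy)
    rw [Ring.inverse_unit]
    exact u⁻¹.isUnit
  have h1 : (1 : R) ∈ ((Ring.inverse : R → R) '' connectedComponentIn (uSet R) (1 : R)) :=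
    ⟨1, mem_connectedComponentIn (show (1:R) ∈ uSet R from isUnit_one), by simp⟩
  exact hpc.subset_connectedComponentIn h1 hsub ⟨v, hv, rfl⟩

end UnitsComp

section Radical

variable {R : Type*} [Ring R]

lemma exists_left_inv_one_add_of_mem_jacobson {b : R}
    (hb : b ∈ Ideal.jacobson (⊥ : Ideal R)) : ∃ w : R, w * (1 + b) = 1 := by
  by_cases hspan : Ideal.span {(1 : R) + b} = ⊤
  · have h1 : (1 : R) ∈ Ideal.span {(1 : R) + b} := hspan ▸ Submodule.mem_top
    obtain ⟨a, ha⟩ := Ideal.mem_span_singleton'.mp h1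
    exact ⟨a, ha⟩
  · obtain ⟨M, hMmax, hMle⟩ := Ideal.exists_le_maximal _ hspan
    have hbM : b ∈ M := by
      have := Ideal.mem_sInf.mp hb (show M ∈ {J : Ideal R | ⊥ ≤ J ∧ J.IsMaximal} from ⟨bot_le, hMmax⟩)
      exact this
    have h1b : (1 : R) + b ∈ M := hMle (Ideal.subset_span rfl)
    have : (1 : R) ∈ M := by
      have := M.sub_mem h1b hbM
      simpa using this
    exact absurd (M.eq_top_iff_one.mpr this) hMmax.ne_top

lemma isUnit_one_add_of_mem_jacobson {b : R}
    (hb : b ∈ Ideal.jacobson (⊥ : Ideal R)) : IsUnit (1 + b) := by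
  obtain ⟨w, hw⟩ := exists_left_inv_one_add_of_mem_jacobson hb
  have hw' : w = 1 + -(w * b) := by
    have : w * 1 + w * b = 1 := by rw [← mul_add]; exact hw
    rw [mul_one] at this
    linear_combination (norm := noncomm_ring) this
  have hwb : -(w * b) ∈ Ideal.jacobson (⊥ : Ideal R) := by
    have h1 : (w * b) ∈ Ideal.jacobson (⊥ : Ideal R) := (Ideal.jacobson ⊥).mul_mem_left w hb
    exact neg_mem h1
  obtain ⟨z, hz⟩ := exists_left_inv_one_add_of_mem_jacobson hwb
  rw [← hw'] at hz
  -- z * w = 1, w * (1+b) = 1 ⇒ z = 1 + b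
  have hzeq : z = 1 + b := by
    calc z = z * (w * (1 + b)) := by rw [hw, mul_one]
    _ = (z * w) * (1 + b) := by rw [mul_assoc]
    _ = 1 + b := by rw [hz, one_mul]
  refine ⟨⟨1 + b, w, ?_, hw⟩, rfl⟩
  rw [← hzeq]; exact hz

end Radical
section Midpoint

variable {E : Type*} [NormedAddCommGroup E] [NormedSpace ℝ E]

/-- Descending sets used in a localized Mazur-Ulam argument. -/
def Hseq (U : Set E) (x y : E) : ℕ → Set E
  | 0 => {z | z ∈ U ∧ dist z x ≤ dist x y / 2 ∧ dist z y ≤ dist x y / 2}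
  | (n+1) => {z | z ∈ Hseq U x y n ∧ ∀ w ∈ Hseq U x y n, dist z w ≤ diam (Hseq U x y n) / 2}

lemma Hseq_subset_zero (U : Set E) (x y : E) : ∀ n, Hseq U x y n ⊆ Hseq U x y 0
  | 0 => Set.Subset.rfl
  | (n+1) => fun z hz => Hseq_subset_zero U x y n hz.1

lemma Hseq_subset_U (U : Set E) (x y : E) (n : ℕ) : Hseq U x y n ⊆ U :=
  fun _ hz => (Hseq_subset_zero U x y n hz).1

lemma Hseq_bounded (U : Set E) (x y : E) (n : ℕ) : IsBounded (Hseq U x y n) := by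
  apply (isBounded_closedBall (x := x) (r := dist x y / 2)).subset
  intro z hz
  exact mem_closedBall.mpr (Hseq_subset_zero U x y n hz).2.1

lemma Hseq_diam (U : Set E) (x y : E) : ∀ n, diam (Hseq U x y n) ≤ dist x y * (2⁻¹)^n
  | 0 => by
    apply diam_le_of_forall_dist_le (by positivity)
    rintro z ⟨_, hzx, _⟩ w ⟨_, hwx, _⟩
    calc dist z w ≤ dist z x + dist x w := dist_triangle _ _ _
      _ ≤ dist x y / 2 + dist x y / 2 := by
          exact add_le_add hzx (dist_comm x w ▸ hwx)
      _ = dist x y * (2⁻¹)^0 := by ring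
  | (n+1) => by
    apply diam_le_of_forall_dist_le (by positivity)
    rintro z ⟨hz, hz2⟩ w ⟨hw, _⟩
    calc dist z w ≤ diam (Hseq U x y n) / 2 := hz2 w hw
      _ ≤ dist x y * (2⁻¹)^n / 2 := by linarith [Hseq_diam U x y n]
      _ = dist x y * (2⁻¹)^(n+1) := by ring

lemma Hseq_reflect (U : Set E) (x y : E)
    (hball : closedBall (midpoint ℝ x y) (dist x y / 2) ⊆ U) :
    ∀ n, ∀ z ∈ Hseq U x y n, x + y - z ∈ Hseq U x y n := by
  set m := midpoint ℝ x y with hm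
  have hsum : m + m = x + y := midpoint_add_self ℝ x y
  have key : ∀ z : E, (x + y - z) - m = m - z := by
    intro z; rw [← hsum]; abel
  have hdist : ∀ z : E, dist (x + y - z) m = dist z m := by
    intro z
    rw [dist_eq_norm, key z, ← neg_sub z m, norm_neg, ← dist_eq_norm]
  intro n
  induction n with
  | zero =>
    rintro z ⟨hzU, hzx, hzy⟩
    have hzm : dist z m ≤ dist x y / 2 := by
      have := dist_midpoint_midpoint_le z z x y
      rw [midpoint_self] at this
      calc dist z m ≤ (dist z x + dist z y)/2 := this
        _ ≤ (dist x y / 2 + dist x y / 2) / 2 := by linarith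
        _ ≤ dist x y / 2 := by linarith [dist_nonneg (x := x) (y := y)]
    refine ⟨hball (mem_closedBall.mpr ((hdist z).le.trans hzm)), ?_, ?_⟩
    · have : (x + y - z) - x = y - z := by abel
      rw [dist_eq_norm, this, ← dist_eq_norm, dist_comm]
      exact hzy
    · have : (x + y - z) - y = x - z := by abel
      rw [dist_eq_norm, this, ← dist_eq_norm, dist_comm]
      exact hzx
  | succ n ih =>
    rintro z ⟨hz, hz2⟩
    refine ⟨ih z hz, fun w hw => ?_⟩
    have h1 : dist (x + y - z) w = dist z (x + y - w) := by
      rw [dist_eq_norm, dist_eq_norm]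
      have : (x + y - z) - w = -(z - (x + y - w)) := by abel
      rw [this, norm_neg]
    rw [h1]
    exact hz2 _ (ih w hw)

lemma midpoint_mem_Hseq (U : Set E) (x y : E)
    (hball : closedBall (midpoint ℝ x y) (dist x y / 2) ⊆ U) :
    ∀ n, midpoint ℝ x y ∈ Hseq U x y n := by
  set m := midpoint ℝ x y with hm
  have hsum : m + m = x + y := midpoint_add_self ℝ x y
  intro n
  induction n with
  | zero =>
    refine ⟨hball (mem_closedBall.mpr (by simp [dist_nonneg]; positivity)), ?_, ?_⟩
    · rw [dist_comm, dist_left_midpoint]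
      simp [abs_of_nonneg]
      rw [inv_mul_eq_div]
    · rw [dist_comm, dist_right_midpoint]
      rw [Real.norm_two, inv_mul_eq_div, dist_comm]
  | succ n ih =>
    refine ⟨ih, fun w hw => ?_⟩
    have h2 : (2:ℝ) • (m - w) = (x + y - w) - w := by
      rw [two_smul, ← hsum]; abel
    have hnorm : dist m w = dist (x + y - w) w / 2 := by
      rw [dist_eq_norm, dist_eq_norm]
      have := congrArg norm h2
      rw [norm_smul, Real.norm_two] at this
      linarith [this]
    rw [hnorm]
    have hrefl := Hseq_reflect U x y hball n w hw
    have := dist_le_diam_of_mem (Hseq_bounded U x y n) hrefl hw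
    linarith

end Midpoint

section Equivariance

variable {E F : Type*} [NormedAddCommGroup E] [NormedSpace ℝ E]
  [NormedAddCommGroup F] [NormedSpace ℝ F]

lemma diam_eq_of_isometric {S : Set E} {S' : Set F} (f : E → F) (g : F → E)
    (hf : MapsTo f S S') (hg : MapsTo g S' S)
    (hiso : ∀ p ∈ S, ∀ q ∈ S, dist (f p) (f q) = dist p q)
    (hgiso : ∀ p ∈ S', ∀ q ∈ S', dist (g p) (g q) = dist p q)
    (hbddS : IsBounded S) (hbddS' : IsBounded S') : diam S' = diam S := by
  apply le_antisymm
  · apply diam_le_of_forall_dist_le diam_nonneg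
    intro p hp q hq
    rw [← hgiso _ hp _ hq]
    exact dist_le_diam_of_mem hbddS (hg hp) (hg hq)
  · apply diam_le_of_forall_dist_le diam_nonneg
    intro p hp q hq
    rw [← hiso _ hp _ hq]
    exact dist_le_diam_of_mem hbddS' (hf hp) (hf hq)

variable (U : Set E) (V : Set F) (f : E → F) (g : F → E)

variable (hfU : MapsTo f U V) (hgV : MapsTo g V U)
  (hiso : ∀ p ∈ U, ∀ q ∈ U, dist (f p) (f q) = dist p q)
  (hgf : ∀ p ∈ U, g (f p) = p) (hfg : ∀ q ∈ V, f (g q) = q)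

include hfU hgV hiso hgf hfg

lemma giso : ∀ p ∈ V, ∀ q ∈ V, dist (g p) (g q) = dist p q := by
  intro p hp q hq
  rw [← hiso _ (hgV hp) _ (hgV hq), hfg _ hp, hfg _ hq]

lemma Hseq_equiv (x y : E) (hx : x ∈ U) (hy : y ∈ U) :
    ∀ n, (MapsTo f (Hseq U x y n) (Hseq V (f x) (f y) n)) ∧
      (MapsTo g (Hseq V (f x) (f y) n) (Hseq U x y n)) := by
  have hgiso := giso U V f g hfU hgV hiso hgf hfg
  have hdxy : dist (f x) (f y) = dist x y := hiso _ hx _ hy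
  intro n
  induction n with
  | zero =>
    constructor
    · rintro z ⟨hzU, hzx, hzy⟩
      exact ⟨hfU hzU, by rwa [hiso _ hzU _ hx, hdxy], by rwa [hiso _ hzU _ hy, hdxy]⟩
    · rintro z ⟨hzV, hzx, hzy⟩
      refine ⟨hgV hzV, ?_, ?_⟩
      · have h : dist (g z) x = dist z (f x) := by
          rw [← hgiso _ hzV _ (hfU hx), hgf _ hx]
        rwa [h, ← hdxy]
      · have h : dist (g z) y = dist z (f y) := by
          rw [← hgiso _ hzV _ (hfU hy), hgf _ hy]
        rwa [h, ← hdxy]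
  | succ n ih =>
    obtain ⟨ihf, ihg⟩ := ih
    have hUsub : Hseq U x y n ⊆ U := Hseq_subset_U U x y n
    have hVsub : Hseq V (f x) (f y) n ⊆ V := Hseq_subset_U V (f x) (f y) n
    have hdiam : diam (Hseq V (f x) (f y) n) = diam (Hseq U x y n) :=
      diam_eq_of_isometric f g ihf ihg
        (fun p hp q hq => hiso _ (hUsub hp) _ (hUsub hq))
        (fun p hp q hq => hgiso _ (hVsub hp) _ (hVsub hq))
        (Hseq_bounded U x y n) (Hseq_bounded V (f x) (f y) n)
    constructor
    · rintro z ⟨hz, hz2⟩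
      refine ⟨ihf hz, fun w hw => ?_⟩
      have hwV : w ∈ V := hVsub hw
      have h1 : dist (f z) w = dist z (g w) := by
        conv_lhs => rw [← hfg _ hwV]
        exact hiso _ (hUsub hz) _ (hUsub (ihg hw))
      rw [h1, hdiam]
      exact hz2 _ (ihg hw)
    · rintro z ⟨hz, hz2⟩
      refine ⟨ihg hz, fun w hw => ?_⟩
      have h1 : dist (g z) w = dist z (f w) := by
        conv_lhs => rw [← hgf _ (hUsub hw)]
        exact hgiso _ (hVsub hz) _ (hVsub (ihf hw))
      rw [h1, ← hdiam]
      exact hz2 _ (ihf hw)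

lemma isometry_midpoint (x y : E) (hx : x ∈ U) (hy : y ∈ U)
    (hAball : closedBall (midpoint ℝ x y) (dist x y / 2) ⊆ U)
    (hBball : closedBall (midpoint ℝ (f x) (f y)) (dist x y / 2) ⊆ V) :
    f (midpoint ℝ x y) = midpoint ℝ (f x) (f y) := by
  have hdxy : dist (f x) (f y) = dist x y := hiso _ hx _ hy
  by_cases hxy : x = y
  · subst hxy
    rw [midpoint_self, midpoint_self]
  have hd : 0 < dist x y := dist_pos.mpr hxy
  have hmem : ∀ n, midpoint ℝ x y ∈ Hseq U x y n := midpoint_mem_Hseq U x y hAball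
  have hmem' : ∀ n, midpoint ℝ (f x) (f y) ∈ Hseq V (f x) (f y) n := by
    apply midpoint_mem_Hseq V (f x) (f y)
    rwa [hdxy]
  have hfmem : ∀ n, f (midpoint ℝ x y) ∈ Hseq V (f x) (f y) n := fun n =>
    (Hseq_equiv U V f g hfU hgV hiso hgf hfg x y hx hy n).1 (hmem n)
  have hdist : ∀ n : ℕ, dist (f (midpoint ℝ x y)) (midpoint ℝ (f x) (f y)) ≤
      dist x y * (2⁻¹)^n := by
    intro n
    calc dist (f (midpoint ℝ x y)) (midpoint ℝ (f x) (f y))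
        ≤ diam (Hseq V (f x) (f y) n) :=
          dist_le_diam_of_mem (Hseq_bounded V (f x) (f y) n) (hfmem n) (hmem' n)
      _ ≤ dist (f x) (f y) * (2⁻¹)^n := Hseq_diam V (f x) (f y) n
      _ = dist x y * (2⁻¹)^n := by rw [hdxy]
  by_contra hne
  have hpos : 0 < dist (f (midpoint ℝ x y)) (midpoint ℝ (f x) (f y)) := dist_pos.mpr hne
  obtain ⟨n, hn⟩ := exists_pow_lt_of_lt_one
    (show 0 < dist (f (midpoint ℝ x y)) (midpoint ℝ (f x) (f y)) / dist x y by positivity)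
    (show (2⁻¹ : ℝ) < 1 by norm_num)
  have h1 := hdist n
  rw [lt_div_iff₀ hd] at hn
  nlinarith [hn, h1]

end Equivariance
section BallTransfer

variable {E F : Type*} [NormedAddCommGroup E] [NormedSpace ℝ E] [CompleteSpace E]
  [NormedAddCommGroup F] [NormedSpace ℝ F]
  (U : Set E) (V : Set F) (f : E → F) (g : F → E)
  (hfU : MapsTo f U V) (hgV : MapsTo g V U)
  (hiso : ∀ p ∈ U, ∀ q ∈ U, dist (f p) (f q) = dist p q)
  (hgf : ∀ p ∈ U, g (f p) = p) (hfg : ∀ q ∈ V, f (g q) = q)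

include hfU hgV hiso hgf hfg in
lemma ball_transfer (hVopen : IsOpen V)
    (u : E) (r : ℝ) (hu : u ∈ U) (hball : ball u r ⊆ U) :
    ball (f u) r ⊆ V := by
  rcases le_or_gt r 0 with hr | hr
  · rw [ball_eq_empty.mpr hr]; exact empty_subset _
  have hgiso := giso U V f g hfU hgV hiso hgf hfg
  have hfuV : f u ∈ V := hfU hu
  set s := ball (f u) r with hs
  -- core closure property
  have core : ∀ b ∈ s, b ∈ closure (s ∩ V) → b ∈ V := by
    intro b hb hbc
    obtain ⟨bs, hbs, hblim⟩ := mem_closure_iff_seq_limit.mp hbc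
    set a : ℕ → E := fun n => g (bs n) with ha
    have haU : ∀ n, a n ∈ U := fun n => hgV (hbs n).2
    have hdista : ∀ n m, dist (a n) (a m) = dist (bs n) (bs m) := fun n m =>
      hgiso _ (hbs n).2 _ (hbs m).2
    have hbcauchy : CauchySeq bs := hblim.cauchySeq
    have hacauchy : CauchySeq a := by
      rw [Metric.cauchySeq_iff] at hbcauchy ⊢
      intro ε hε
      obtain ⟨N, hN⟩ := hbcauchy ε hε
      exact ⟨N, fun m hm n hn => by rw [hdista m n]; exact hN m hm n hn⟩
    obtain ⟨α, hα⟩ := cauchySeq_tendsto_of_complete hacauchy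
    have hαdist : dist α u = dist b (f u) := by
      have h1 : Filter.Tendsto (fun n => dist (a n) u) Filter.atTop (nhds (dist α u)) :=
        hα.dist tendsto_const_nhds
      have h2 : Filter.Tendsto (fun n => dist (bs n) (f u)) Filter.atTop
          (nhds (dist b (f u))) := hblim.dist tendsto_const_nhds
      have heq : ∀ n, dist (a n) u = dist (bs n) (f u) := by
        intro n
        have : dist (a n) (g (f u)) = dist (bs n) (f u) := hgiso _ (hbs n).2 _ hfuV
        rwa [hgf _ hu] at this
      exact tendsto_nhds_unique (by simpa only [heq] using h1) h2
    have hαball : α ∈ ball u r := by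
      rw [mem_ball, hαdist]
      exact hb
    have hαU : α ∈ U := hball hαball
    have hfα : Filter.Tendsto bs Filter.atTop (nhds (f α)) := by
      rw [tendsto_iff_dist_tendsto_zero]
      have heq : ∀ n, dist (bs n) (f α) = dist (a n) α := by
        intro n
        have h3 : dist (f (a n)) (f α) = dist (a n) α := hiso _ (haU n) _ hαU
        rw [← h3, hfg _ (hbs n).2]
      simp only [heq]
      rw [← tendsto_iff_dist_tendsto_zero]
      exact hα
    have : b = f α := tendsto_nhds_unique hblim hfα
    rw [this]
    exact hfU hαU
  -- preconnectedness argument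
  intro b hb
  by_contra hbV
  have hpc : IsPreconnected s := (convex_ball (f u) r).isPreconnected
  have hVc : IsOpen (closure (s ∩ V))ᶜ := isClosed_closure.isOpen_compl
  have hcover : s ⊆ V ∪ (closure (s ∩ V))ᶜ := by
    intro z hz
    by_cases hzc : z ∈ closure (s ∩ V)
    · exact Or.inl (core z hz hzc)
    · exact Or.inr hzc
  have h1 : (s ∩ V).Nonempty := ⟨f u, mem_ball_self hr, hfuV⟩
  have h2 : (s ∩ (closure (s ∩ V))ᶜ).Nonempty := by
    refine ⟨b, hb, fun hbc => hbV (core b hb hbc)⟩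
  obtain ⟨z, hzs, hzV, hzc⟩ := hpc V (closure (s ∩ V))ᶜ hVopen hVc hcover h1 h2
  exact hzc (subset_closure ⟨hzs, hzV⟩)

end BallTransfer

section LemmaZ

variable {R : Type*} [NormedRing R] [NormedAlgebra ℂ R] [CompleteSpace R]

-- M is closed
lemma maximal_isClosed (M : Ideal R) (hM : M.IsMaximal) : IsClosed (M : Set R) := by
  have h1 : (1 : R) ∉ closure (M : Set R) := by
    intro h1
    obtain ⟨m, hmM, hdist⟩ := Metric.mem_closure_iff.mp h1 1 one_pos
    have : IsUnit m := by
      have h2 : ‖1 - m‖ < 1 := by rw [dist_eq_norm] at hdist; exact hdist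
      have := (Units.oneSub (1 - m) h2).isUnit
      simpa using this
    exact hM.ne_top (Ideal.eq_top_of_isUnit_mem M hmM this)
  have hclos : M.topologicalClosure = M := by
    refine (hM.eq_of_le ?_ M.le_topologicalClosure).symm
    intro htop
    apply h1
    have : (1 : R) ∈ M.topologicalClosure := htop ▸ Submodule.mem_top
    exact this
  have : closure (M : Set R) = (M : Set R) := by
    conv_rhs => rw [← hclos]
    rfl
  rw [← this]
  exact isClosed_closure

variable (M : Ideal R) (hM : M.IsMaximal)

/-- The `B⁰`-orbit of `x` modulo `M`. -/
def orbitSet (x : R) : Set R :=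
  {y : R | ∃ v ∈ connectedComponentIn (uSet R) (1 : R), ∃ m ∈ M, v * x + m = y}

include hM in
lemma orbitSet_isOpen (x : R) (hx : x ∉ M) : IsOpen (orbitSet M x) := by
  have hMclosed := maximal_isClosed M hM
  -- the continuous linear map (z, m) ↦ z * x + m is surjective, hence open
  set M' : Submodule ℂ R := M.restrictScalars ℂ with hM'
  have hM'closed : IsClosed (M' : Set R) := hMclosed
  haveI : CompleteSpace M' := hM'closed.completeSpace_coe
  set φ : R × M' →L[ℂ] R :=
    ((ContinuousLinearMap.mul ℂ R).flip x).coprod (M'.subtypeL) with hφ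
  have hφap : ∀ p : R × M', φ p = p.1 * x + (p.2 : R) := fun p => rfl
  have hsurj : Function.Surjective φ := by
    intro z
    have hlt : M < M ⊔ Ideal.span {x} := by
      refine lt_of_le_of_ne le_sup_left (fun h => hx ?_)
      have : x ∈ M ⊔ Ideal.span {x} :=
        Submodule.mem_sup_right (Ideal.subset_span rfl)
      rwa [← h] at this
    have htop : M ⊔ Ideal.span {x} = ⊤ := hM.1.2 _ hlt
    have hz : z ∈ M ⊔ Ideal.span {x} := htop ▸ Submodule.mem_top
    obtain ⟨m, hmM, w, hwspan, hsum⟩ := Submodule.mem_sup.mp hz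
    obtain ⟨a, ha⟩ := Ideal.mem_span_singleton'.mp hwspan
    exact ⟨(a, ⟨m, hmM⟩), by rw [hφap]; simp only; rw [ha]; rw [add_comm]; exact hsum⟩
  have hopen : IsOpenMap φ := φ.isOpenMap hsurj
  -- openness of the orbit
  rw [Metric.isOpen_iff]
  rintro y ⟨v, hv, m, hmM, rfl⟩
  have hvu : IsUnit v := mem_uSet_iff.mp (connectedComponentIn_subset _ _ hv)
  obtain ⟨u, rfl⟩ := hvu
  set δ : ℝ := (‖((u⁻¹ : Rˣ) : R)‖ + 1)⁻¹ with hδ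
  have hδpos : 0 < δ := by positivity
  have himg : IsOpen (φ '' Metric.ball 0 δ) := hopen _ Metric.isOpen_ball
  have h0mem : (0 : R) ∈ φ '' Metric.ball 0 δ :=
    ⟨0, Metric.mem_ball_self hδpos, by rw [hφap]; simp⟩
  obtain ⟨ε, hεpos, hεsub⟩ := Metric.isOpen_iff.mp himg 0 h0mem
  refine ⟨ε, hεpos, ?_⟩
  intro z hz
  have hzy : z - (↑u * x + m) ∈ φ '' Metric.ball 0 δ := by
    apply hεsub
    rw [Metric.mem_ball, dist_zero_right, ← dist_eq_norm]
    exact hz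
  obtain ⟨⟨w, m'⟩, hwball, hweq⟩ := hzy
  rw [hφap] at hweq
  simp only at hweq
  have hwnorm : ‖w‖ < δ := by
    have := hwball
    rw [Metric.mem_ball, dist_zero_right] at this
    calc ‖w‖ ≤ ‖((w, m') : R × M')‖ := norm_fst_le ((w, m') : R × M')
      _ < δ := this
  -- z = (u * (1 + u⁻¹ w)) x + (m + m')
  have hsmall : ‖((u⁻¹ : Rˣ) : R) * w‖ < 1 := by
    calc ‖((u⁻¹ : Rˣ) : R) * w‖ ≤ ‖((u⁻¹ : Rˣ) : R)‖ * ‖w‖ := norm_mul_le _ _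
      _ ≤ ‖((u⁻¹ : Rˣ) : R)‖ * δ :=
          mul_le_mul_of_nonneg_left hwnorm.le (norm_nonneg _)
      _ < 1 := by
          rw [hδ, mul_inv_lt_iff₀ (by positivity)]
          linarith [norm_nonneg ((u⁻¹ : Rˣ) : R)]
  refine ⟨↑u * (1 + ((u⁻¹ : Rˣ) : R) * w), ?_, m + m', M.add_mem hmM m'.2, ?_⟩
  · exact princComp_mul hv (mem_princComp_of_norm_lt hsmall)
  · have huw : ↑u * (1 + ((u⁻¹ : Rˣ) : R) * w) = ↑u + w := by
      rw [mul_add, mul_one, ← mul_assoc]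
      simp
    rw [huw, add_mul]
    have : z = (↑u * x + m) + (w * x + ↑m') := by rw [hweq]; abel
    rw [this]; abel

end LemmaZ
section LemmaZ2

variable {R : Type*} [NormedRing R] [NormedAlgebra ℂ R] [CompleteSpace R]
variable (M : Ideal R) (hM : M.IsMaximal)

lemma smul_mem_ideal (α : ℂ) {z : R} (hz : z ∈ M) : α • z ∈ M := by
  rw [Algebra.smul_def]
  exact M.mul_mem_left _ hz

lemma mem_of_smul_mem_ideal {α : ℂ} {z : R} (hα : α ≠ 0) (h : α • z ∈ M) : z ∈ M := by
  have h2 := smul_mem_ideal M α⁻¹ h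
  rwa [smul_smul, inv_mul_cancel₀ hα, one_smul] at h2

lemma real_smul_eq_complex_smul (t : ℝ) (x : R) : t • x = ((t : ℂ)) • x := by
  rw [← smul_one_smul ℂ t x]
  norm_num

include hM in
lemma compl_maximal_pathConnected : IsPathConnected ((M : Set R)ᶜ) := by
  have h1M : (1 : R) ∉ M := fun h => hM.ne_top (M.eq_top_iff_one.mpr h)
  refine ⟨1, h1M, ?_⟩
  intro y hy
  have hy' : y ∉ M := hy
  by_cases hseg : ∀ t : ℝ, t ∈ Set.Icc (0:ℝ) 1 → (1 - t) • (1 : R) + t • y ∉ M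
  · apply JoinedIn.of_segment_subset
    intro z hz
    rw [segment_eq_image ℝ] at hz
    obtain ⟨t, ht, rfl⟩ := hz
    exact hseg t ht
  · push_neg at hseg
    obtain ⟨t₀, ht₀I, hm₀⟩ := hseg
    have ht₀0 : t₀ ≠ 0 := by
      intro h; apply h1M; rw [h] at hm₀; simpa using hm₀
    have ht₀1 : t₀ ≠ 1 := by
      intro h; apply hy'; rw [h] at hm₀; simpa using hm₀
    set m₀ : R := (1 - t₀) • (1 : R) + t₀ • y with hm₀def
    have ht₀pos : 0 < t₀ := lt_of_le_of_ne ht₀I.1 (Ne.symm ht₀0)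
    have ht₀lt : t₀ < 1 := lt_of_le_of_ne ht₀I.2 ht₀1
    set s' : ℝ := (1 - t₀) / t₀ with hs'
    have hs'pos : 0 < s' := by
      apply div_pos; linarith; exact ht₀pos
    -- y = t₀⁻¹ • m₀ - s' • 1
    have hyeq : y = t₀⁻¹ • m₀ - s' • (1 : R) := by
      rw [hm₀def, smul_add, smul_smul, smul_smul]
      rw [inv_mul_cancel₀ ht₀0, one_smul, hs']
      have : t₀⁻¹ * (1 - t₀) = (1 - t₀)/t₀ := by ring
      rw [this]
      abel
    set I1 : R := (Complex.I) • (1 : R) with hI1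
    have hjoin1 : JoinedIn ((M : Set R)ᶜ) 1 I1 := by
      apply JoinedIn.of_segment_subset
      intro z hz
      rw [segment_eq_image ℝ] at hz
      obtain ⟨t, ht, rfl⟩ := hz
      intro hzM
      simp only at hzM
      have hform : (1 - t) • (1 : R) + t • I1 = (((1 - t : ℝ) : ℂ) + (t : ℂ) * Complex.I) • (1 : R) := by
        rw [hI1, real_smul_eq_complex_smul, real_smul_eq_complex_smul t, smul_smul, add_smul]
      rw [hform] at hzM
      have hα : (((1 - t : ℝ) : ℂ) + (t : ℂ) * Complex.I) ≠ 0 := by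
        intro h
        rw [Complex.ext_iff] at h
        simp at h
        rcases ht with ⟨ht0, ht1⟩
        obtain ⟨h1, h2⟩ := h
        linarith
      exact h1M (mem_of_smul_mem_ideal M hα hzM)
    have hjoin2 : JoinedIn ((M : Set R)ᶜ) I1 y := by
      apply JoinedIn.of_segment_subset
      intro z hz
      rw [segment_eq_image ℝ] at hz
      obtain ⟨t, ht, rfl⟩ := hz
      intro hzM
      simp only at hzM
      rcases eq_or_lt_of_le ht.2 with ht1 | ht1
      · rw [ht1] at hzM
        simp at hzM
        exact hy' hzM
      -- z = β • 1 + (t * t₀⁻¹) • m₀ with β = (1-t) I - t s'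
      have hform : (1 - t) • I1 + t • y =
          ((((1 - t : ℝ) : ℂ)) * Complex.I - ((t * s' : ℝ) : ℂ)) • (1 : R)
            + (t * t₀⁻¹) • m₀ := by
        rw [hyeq, hI1]
        rw [smul_sub, smul_smul, smul_smul]
        rw [real_smul_eq_complex_smul (1-t), real_smul_eq_complex_smul (t * t₀⁻¹),
            real_smul_eq_complex_smul (t * s')]
        rw [smul_smul, sub_smul]
        push_cast
        ring_nf
        abel
      rw [hform] at hzM
      have hm₀mem : (t * t₀⁻¹) • m₀ ∈ M := by
        rw [real_smul_eq_complex_smul]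
        exact smul_mem_ideal M _ hm₀
      have hβmem : ((((1 - t : ℝ) : ℂ)) * Complex.I - ((t * s' : ℝ) : ℂ)) • (1 : R) ∈ M := by
        have := M.sub_mem hzM hm₀mem
        simpa using this
      have hβ : ((((1 - t : ℝ) : ℂ)) * Complex.I - ((t * s' : ℝ) : ℂ)) ≠ 0 := by
        intro h
        rw [Complex.ext_iff] at h
        simp at h
        obtain ⟨h1, h2⟩ := h
        linarith
      exact h1M (mem_of_smul_mem_ideal M hβ hβmem)
    exact hjoin1.trans hjoin2

include hM in
lemma mem_maximal_of_isUnit_add (c : R)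
    (hc : ∀ v ∈ connectedComponentIn (uSet R) (1 : R), IsUnit (1 + v * c)) : c ∈ M := by
  by_contra hcM
  have h1M : (1 : R) ∉ M := fun h => hM.ne_top (M.eq_top_iff_one.mpr h)
  have hopen := orbitSet_isOpen M hM c hcM
  have h1comp : (1:R) ∈ connectedComponentIn (uSet R) (1 : R) :=
    mem_connectedComponentIn (show (1:R) ∈ uSet R from isUnit_one)
  have hcorb : c ∈ orbitSet M c := ⟨1, h1comp, 0, M.zero_mem, by simp⟩
  have horbsub : orbitSet M c ⊆ (M : Set R)ᶜ := by
    rintro y ⟨v, hv, m, hm, rfl⟩ hmem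
    have hvc : v * c ∈ M := by
      have := M.sub_mem hmem hm; simpa using this
    obtain ⟨u, rfl⟩ := mem_uSet_iff.mp (connectedComponentIn_subset _ _ hv)
    have hcm : c ∈ M := by
      have h2 := M.mul_mem_left (↑u⁻¹) hvc
      rwa [← mul_assoc, Units.inv_mul, one_mul] at h2
    exact hcM hcm
  have hclos : ∀ y, y ∉ M → y ∈ closure (orbitSet M c) → y ∈ orbitSet M c := by
    intro y hyM hyc
    have hyopen := orbitSet_isOpen M hM y hyM
    have hyorb : y ∈ orbitSet M y := ⟨1, h1comp, 0, M.zero_mem, by simp⟩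
    obtain ⟨z, hz1, hz2⟩ := _root_.mem_closure_iff.mp hyc _ hyopen hyorb
    obtain ⟨v₁, hv₁, m₁, hm₁, hze⟩ := hz1
    obtain ⟨v₂, hv₂, m₂, hm₂, hze'⟩ := hz2
    obtain ⟨u₁, rfl⟩ := mem_uSet_iff.mp (connectedComponentIn_subset _ _ hv₁)
    have hinv : ((u₁⁻¹ : Rˣ) : R) ∈ connectedComponentIn (uSet R) (1 : R) := by
      have := princComp_inv hv₁
      rwa [Ring.inverse_unit] at this
    refine ⟨↑u₁⁻¹ * v₂, princComp_mul hinv hv₂, ↑u₁⁻¹ * (m₂ - m₁),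
      M.mul_mem_left _ (M.sub_mem hm₂ hm₁), ?_⟩
    have hz₁ : z = ↑u₁ * y + m₁ := hze.symm
    have hz₂ : z = v₂ * c + m₂ := hze'.symm
    have : ↑u₁ * y = v₂ * c + (m₂ - m₁) := by
      rw [← sub_eq_iff_eq_add] at hz₁
      rw [← hz₁, hz₂]; abel
    calc ↑u₁⁻¹ * v₂ * c + ↑u₁⁻¹ * (m₂ - m₁) = ↑u₁⁻¹ * (v₂ * c + (m₂ - m₁)) := by
          rw [mul_add, mul_assoc]
      _ = ↑u₁⁻¹ * (↑u₁ * y) := by rw [← this]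
      _ = y := by rw [← mul_assoc, Units.inv_mul, one_mul]
  have hm1s : (-1 : R) ∉ M := by
    intro h
    have := neg_mem h
    simp at this
    exact h1M this
  have hm1 : (-1 : R) ∉ orbitSet M c := by
    rintro ⟨v, hv, m, hmM, heq⟩
    have hunit : IsUnit (1 + v * c) := hc v hv
    have hmemM : (1 : R) + v * c ∈ M := by
      have h2 : (1:R) + v * c = -m := by
        have h3 : v * c = -1 - m := by rw [← heq]; abel
        rw [h3]; abel
      rw [h2]
      exact neg_mem hmM
    exact hM.ne_top (Ideal.eq_top_of_isUnit_mem M hmemM hunit)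
  have hpc := (compl_maximal_pathConnected M hM).isConnected.isPreconnected
  have hcover : ((M : Set R)ᶜ) ⊆ orbitSet M c ∪ (closure (orbitSet M c))ᶜ := by
    intro z hz
    by_cases hzc : z ∈ closure (orbitSet M c)
    · exact Or.inl (hclos z hz hzc)
    · exact Or.inr hzc
  obtain ⟨z, hzs, hzo, hzc⟩ := hpc (orbitSet M c) (closure (orbitSet M c))ᶜ hopen
    isClosed_closure.isOpen_compl hcover ⟨c, hcM, hcorb⟩
    ⟨-1, hm1s, fun hcl => hm1 (hclos _ hm1s hcl)⟩
  exact hzc (subset_closure hzo)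

end LemmaZ2
/-- If there is a surjective isometry between open subgroups of the invertible
groups of unital complex Banach algebras `A` and `B`, and `B` is semisimple,
then `A` is semisimple. -/
theorem semisimple_of_isometry_open_subgroups
    {A B : Type*} [NormedRing A] [NormedAlgebra ℂ A] [CompleteSpace A]
    [NormedRing B] [NormedAlgebra ℂ B] [CompleteSpace B]
    (𝔄 : Set A) (𝔅 : Set B)
    (h𝔄unit : ∀ a ∈ 𝔄, IsUnit a) (h𝔄one : (1 : A) ∈ 𝔄)
    (h𝔄mul : ∀ a ∈ 𝔄, ∀ b ∈ 𝔄, a * b ∈ 𝔄)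
    (h𝔄inv : ∀ a ∈ 𝔄, Ring.inverse a ∈ 𝔄) (h𝔄open : IsOpen 𝔄)
    (h𝔅unit : ∀ b ∈ 𝔅, IsUnit b) (h𝔅one : (1 : B) ∈ 𝔅)
    (h𝔅mul : ∀ a ∈ 𝔅, ∀ b ∈ 𝔅, a * b ∈ 𝔅)
    (h𝔅inv : ∀ b ∈ 𝔅, Ring.inverse b ∈ 𝔅) (h𝔅open : IsOpen 𝔅)
    (T : A → B) (hmaps : Set.MapsTo T 𝔄 𝔅) (hsurj : Set.SurjOn T 𝔄 𝔅)
    (hiso : ∀ a ∈ 𝔄, ∀ b ∈ 𝔄, ‖T a - T b‖ = ‖a - b‖)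
    (hBss : Ideal.jacobson (⊥ : Ideal B) = ⊥) :
    Ideal.jacobson (⊥ : Ideal A) = ⊥ := by
  classical
  -- trivial algebra case
  by_cases htrivA : (1 : A) = 0
  · have hall : ∀ x : A, x = 0 := fun x => by
      calc x = x * 1 := (mul_one x).symm
        _ = 0 := by rw [htrivA, mul_zero]
    refine le_antisymm (fun x _ => ?_) bot_le
    rw [Submodule.mem_bot]
    exact hall x
  haveI : Nontrivial A := ⟨⟨1, 0, htrivA⟩⟩
  have hnormone : 0 < ‖(1 : A)‖ := norm_pos_iff.mpr htrivA
  -- B is nontrivial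
  haveI : Nontrivial B := by
    by_contra hB
    rw [not_nontrivial_iff_subsingleton] at hB
    obtain ⟨r, hrpos, hrball⟩ := Metric.isOpen_iff.mp h𝔄open 1 h𝔄one
    set p : A := 1 + (r / (2 * ‖(1:A)‖)) • (1 : A) with hp
    have hpmem : p ∈ 𝔄 := by
      apply hrball
      rw [Metric.mem_ball, dist_eq_norm, hp]
      have : (1 : A) + (r / (2 * ‖(1:A)‖)) • (1 : A) - 1 = (r / (2 * ‖(1:A)‖)) • (1 : A) := by abel
      rw [this, norm_smul, Real.norm_eq_abs, abs_of_pos (by positivity)]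
      have h2 : r / (2 * ‖(1:A)‖) * ‖(1:A)‖ = r / 2 := by
        field_simp
      rw [h2]
      linarith
    have hdist : ‖T p - T 1‖ = ‖p - 1‖ := hiso p hpmem 1 h𝔄one
    have hTeq : T p = T 1 := Subsingleton.elim _ _
    rw [hTeq, sub_self, norm_zero] at hdist
    have : ‖p - 1‖ > 0 := by
      rw [hp]
      have : (1 : A) + (r / (2 * ‖(1:A)‖)) • (1 : A) - 1 = (r / (2 * ‖(1:A)‖)) • (1 : A) := by abel
      rw [this, norm_smul, Real.norm_eq_abs, abs_of_pos (by positivity)]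
      positivity
    rw [← hdist] at this
    exact lt_irrefl _ this
  -- main part
  refine le_antisymm (fun a ha => ?_) bot_le
  rw [Submodule.mem_bot]
  -- distance version of the isometry
  have hisoD : ∀ p ∈ 𝔄, ∀ q ∈ 𝔄, dist (T p) (T q) = dist p q := by
    intro p hp q hq
    rw [dist_eq_norm, dist_eq_norm]
    exact hiso p hp q hq
  -- construct the inverse map S
  have hSex : ∀ b : B, ∃ x : A, b ∈ 𝔅 → (x ∈ 𝔄 ∧ T x = b) := by
    intro b
    by_cases hb : b ∈ 𝔅
    · obtain ⟨x, hx, hTx⟩ := hsurj hb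
      exact ⟨x, fun _ => ⟨hx, hTx⟩⟩
    · exact ⟨1, fun h => absurd h hb⟩
  choose S hS using hSex
  have hgV : Set.MapsTo S 𝔅 𝔄 := fun b hb => (hS b hb).1
  have hfg : ∀ b ∈ 𝔅, T (S b) = b := fun b hb => (hS b hb).2
  have hinj : ∀ p ∈ 𝔄, ∀ q ∈ 𝔄, T p = T q → p = q := by
    intro p hp q hq h
    have := hiso p hp q hq
    rw [h, sub_self, norm_zero] at this
    rw [← sub_eq_zero]
    exact (norm_eq_zero.mp this.symm)
  have hgf : ∀ p ∈ 𝔄, S (T p) = p := fun p hp =>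
    hinj _ (hgV (hmaps hp)) _ hp (hfg _ (hmaps hp))
  -- the radical flow
  have hflowUnit : ∀ (u : A), IsUnit u → ∀ s : ℝ, IsUnit (u + s • a) := by
    intro u hu s
    obtain ⟨w, rfl⟩ := hu
    have hmem : s • (((w⁻¹ : Aˣ) : A) * a) ∈ Ideal.jacobson (⊥ : Ideal A) := by
      rw [real_smul_eq_complex_smul, Algebra.smul_def]
      exact (Ideal.jacobson ⊥).mul_mem_left _ ((Ideal.jacobson ⊥).mul_mem_left _ ha)
    have hunit1 := isUnit_one_add_of_mem_jacobson hmem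
    have heq : (w : A) * (1 + s • (((w⁻¹ : Aˣ) : A) * a)) = (w : A) + s • a := by
      rw [mul_add, mul_one, mul_smul_comm, ← mul_assoc]
      simp
    rw [← heq]
    exact w.isUnit.mul hunit1
  have hflowMem : ∀ u ∈ 𝔄, ∀ s : ℝ, u + s • a ∈ 𝔄 := by
    intro u hu s
    set γ : ℝ → A := fun τ => u + (τ * s) • a with hγ
    have hγcont : Continuous γ := by fun_prop
    have hγunit : ∀ τ : ℝ, IsUnit (γ τ) := fun τ =>
      hflowUnit u (h𝔄unit u hu) (τ * s)
    have h0 : γ 0 = u := by rw [hγ]; simp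
    have h1 : γ 1 = u + s • a := by rw [hγ]; simp
    have hU1 : IsOpen (γ ⁻¹' 𝔄) := h𝔄open.preimage hγcont
    have hU2 : IsOpen (γ ⁻¹' ((uSet A) \ 𝔄)) :=
      (isOpen_units_diff 𝔄 h𝔄unit h𝔄one h𝔄mul h𝔄inv h𝔄open).preimage hγcont
    have hcover : Set.Icc (0:ℝ) 1 ⊆ γ ⁻¹' 𝔄 ∪ γ ⁻¹' ((uSet A) \ 𝔄) := by
      intro τ _
      by_cases h : γ τ ∈ 𝔄
      · exact Or.inl h
      · exact Or.inr ⟨hγunit τ, h⟩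
    by_contra hend
    have hne2 : (Set.Icc (0:ℝ) 1 ∩ γ ⁻¹' ((uSet A) \ 𝔄)).Nonempty := by
      refine ⟨1, Set.mem_Icc.mpr ⟨zero_le_one, le_refl 1⟩, hγunit 1, ?_⟩
      rw [h1]; exact hend
    have hne1 : (Set.Icc (0:ℝ) 1 ∩ γ ⁻¹' 𝔄).Nonempty := by
      refine ⟨0, Set.mem_Icc.mpr ⟨le_refl 0, zero_le_one⟩, ?_⟩
      show γ 0 ∈ 𝔄
      rw [h0]; exact hu
    obtain ⟨τ, _, hτ1, _, hτ2⟩ := isPreconnected_Icc _ _ hU1 hU2 hcover hne1 hne2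
    exact hτ2 hτ1
  -- flow preserves the principal component of 𝔄
  have hflowComp : ∀ u ∈ connectedComponentIn 𝔄 (1 : A), ∀ s : ℝ,
      u + s • a ∈ connectedComponentIn 𝔄 (1 : A) := by
    intro u hu s
    have huA : u ∈ 𝔄 := connectedComponentIn_subset _ _ hu
    set γ : ℝ → A := fun τ => u + (τ * s) • a with hγ
    have himg : γ '' Set.Icc (0:ℝ) 1 ⊆ 𝔄 := by
      rintro _ ⟨τ, _, rfl⟩
      exact hflowMem u huA (τ * s)
    have hpc : IsPreconnected (γ '' Set.Icc (0:ℝ) 1) :=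
      isPreconnected_Icc.image _ (by fun_prop)
    have humem : u ∈ γ '' Set.Icc (0:ℝ) 1 :=
      ⟨0, Set.mem_Icc.mpr ⟨le_refl 0, zero_le_one⟩, by rw [hγ]; simp⟩
    have hsub := hpc.subset_connectedComponentIn humem himg
    rw [← connectedComponentIn_eq hu] at hsub
    exact hsub ⟨1, Set.mem_Icc.mpr ⟨zero_le_one, le_refl 1⟩, by rw [hγ]; simp⟩
  -- distance to the complement of 𝔄
  have hAcne : (𝔄ᶜ : Set A).Nonempty :=
    ⟨0, fun h0 => not_isUnit_zero (h𝔄unit 0 h0)⟩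
  set ρ : A → ℝ := fun u => Metric.infDist u 𝔄ᶜ with hρdef
  have hballsub : ∀ u ∈ 𝔄, ∀ z, dist z u < ρ u → z ∈ 𝔄 := by
    intro u hu z hz
    by_contra hzc
    have h1 : ρ u ≤ dist u z := Metric.infDist_le_dist_of_mem hzc
    rw [dist_comm] at hz
    linarith
  have hρpos : ∀ u ∈ 𝔄, 0 < ρ u := by
    intro u hu
    obtain ⟨r, hrpos, hrball⟩ := Metric.isOpen_iff.mp h𝔄open u hu
    by_contra hle
    push_neg at hle
    have hlt : Metric.infDist u 𝔄ᶜ < r := lt_of_le_of_lt hle hrpos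
    obtain ⟨z, hz, hdz⟩ := (Metric.infDist_lt_iff hAcne).mp hlt
    exact hz (hrball (by rw [Metric.mem_ball, dist_comm]; exact hdz))
  have hAtransBack : ∀ (s : ℝ) (x : A), x + s • a ∈ 𝔄 → x ∈ 𝔄 := by
    intro s x hx
    have h2 := hflowMem _ hx (-s)
    have heq : x + s • a + (-s) • a = x := by
      rw [add_assoc, ← add_smul]; simp
    rwa [heq] at h2
  have hcompl_trans : ∀ (s : ℝ) (z : A), z ∈ (𝔄ᶜ : Set A) → z + s • a ∈ (𝔄ᶜ : Set A) :=
    fun s z hz hmem => hz (hAtransBack s z hmem)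
  have hρle : ∀ (u : A) (s : ℝ), ρ (u + s • a) ≤ ρ u := by
    intro u s
    by_contra hlt
    push_neg at hlt
    obtain ⟨z, hz, hdz⟩ := (Metric.infDist_lt_iff hAcne).mp hlt
    have hz' : z + s • a ∈ (𝔄ᶜ : Set A) := hcompl_trans s z hz
    have h2 : ρ (u + s • a) ≤ dist (u + s • a) (z + s • a) :=
      Metric.infDist_le_dist_of_mem hz'
    rw [dist_add_right] at h2
    linarith
  have hρtrans : ∀ (u : A) (s : ℝ), ρ (u + s • a) = ρ u := by
    intro u s
    refine le_antisymm (hρle u s) ?_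
    have h2 := hρle (u + s • a) (-s)
    have heq : u + s • a + (-s) • a = u := by
      rw [add_assoc, ← add_smul]; simp
    rwa [heq] at h2
  -- midpoint preservation with margin
  have hmidpt : ∀ x ∈ 𝔄, ∀ y ∈ 𝔄, ∀ R : ℝ, dist x y < R →
      (∀ z, dist z (midpoint ℝ x y) < R → z ∈ 𝔄) →
      T (midpoint ℝ x y) = midpoint ℝ (T x) (T y) := by
    intro x hx y hy R hxy hball
    set m := midpoint ℝ x y with hm
    have hdnn : (0:ℝ) ≤ dist x y := dist_nonneg
    have hRpos : 0 < R := lt_of_le_of_lt hdnn hxy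
    have hmx : dist m x = dist x y / 2 := by
      rw [hm, dist_comm, dist_left_midpoint, Real.norm_two, inv_mul_eq_div]
    have hmy : dist m y = dist x y / 2 := by
      rw [hm, dist_comm, dist_right_midpoint, Real.norm_two, inv_mul_eq_div]
    have hm𝔄 : m ∈ 𝔄 := hball m (by rw [dist_self]; exact hRpos)
    have hAball : Metric.closedBall m (dist x y / 2) ⊆ 𝔄 := by
      intro z hz
      rw [Metric.mem_closedBall] at hz
      exact hball z (lt_of_le_of_lt hz (by linarith))
    have hTball : Metric.ball (T m) R ⊆ 𝔅 := by
      apply ball_transfer 𝔄 𝔅 T S hmaps hgV hisoD hgf hfg h𝔅open m R hm𝔄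
      intro z hz
      rw [Metric.mem_ball] at hz
      exact hball z hz
    have hTmmid : dist (T m) (midpoint ℝ (T x) (T y)) ≤ dist x y / 2 := by
      have h1 : dist (midpoint ℝ (T m) (T m)) (midpoint ℝ (T x) (T y)) ≤
          (dist (T m) (T x) + dist (T m) (T y)) / 2 := dist_midpoint_midpoint_le _ _ _ _
      rw [midpoint_self] at h1
      rw [hisoD m hm𝔄 x hx, hisoD m hm𝔄 y hy, hmx, hmy] at h1
      calc dist (T m) (midpoint ℝ (T x) (T y)) ≤ (dist x y / 2 + dist x y / 2)/2 := h1
        _ ≤ dist x y / 2 := by linarith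
    have hBball : Metric.closedBall (midpoint ℝ (T x) (T y)) (dist x y / 2) ⊆ 𝔅 := by
      intro z hz
      rw [Metric.mem_closedBall] at hz
      apply hTball
      rw [Metric.mem_ball]
      calc dist z (T m) ≤ dist z (midpoint ℝ (T x) (T y)) + dist (midpoint ℝ (T x) (T y)) (T m) :=
            dist_triangle _ _ _
        _ ≤ dist x y / 2 + dist x y / 2 := add_le_add hz (dist_comm (T m) _ ▸ hTmmid)
        _ < R := by linarith
    exact isometry_midpoint 𝔄 𝔅 T S hmaps hgV hisoD hgf hfg x y hx hy hAball hBball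
  -- the four point identity
  have hquad : ∀ u₀ ∈ 𝔄, ∀ u ∈ 𝔄, ∀ w : A, dist u u₀ < ρ u₀/100 → ‖w‖ < ρ u₀/100 →
      T (u + w) + T u₀ = T u + T (u₀ + w) := by
    intro u₀ hu₀ u hu w hdu hw
    have hρ₀ := hρpos u₀ hu₀
    have hdw : ∀ x : A, dist (x + w) x = ‖w‖ := by
      intro x; rw [dist_eq_norm]; congr 1; abel
    have hx1 : u + w ∈ 𝔄 := by
      apply hballsub u₀ hu₀
      calc dist (u + w) u₀ ≤ dist (u + w) u + dist u u₀ := dist_triangle _ _ _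
        _ < ρ u₀/100 + ρ u₀/100 := add_lt_add (by rw [hdw]; exact hw) hdu
        _ < ρ u₀ := by linarith
    have hy2 : u₀ + w ∈ 𝔄 := by
      apply hballsub u₀ hu₀
      rw [hdw]
      linarith
    have hmid_eq : midpoint ℝ (u + w) u₀ = midpoint ℝ u (u₀ + w) := by
      have h1 := midpoint_add_self ℝ (u + w) u₀
      have h2 := midpoint_add_self ℝ u (u₀ + w)
      have h3 : (u + w) + u₀ = u + (u₀ + w) := by abel
      have h5 : (2:ℝ) • midpoint ℝ (u+w) u₀ = (2:ℝ) • midpoint ℝ u (u₀+w) := by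
        rw [two_smul, two_smul, h1, h2, h3]
      exact smul_right_injective A two_ne_zero h5
    set m := midpoint ℝ (u + w) u₀ with hmdef
    have hmu₀ : dist m u₀ ≤ ρ u₀ / 100 := by
      have h1 : dist m u₀ = dist (u+w) u₀ / 2 := by
        rw [hmdef, dist_comm, dist_right_midpoint, Real.norm_two, inv_mul_eq_div, dist_comm]
      rw [h1]
      have h2 : dist (u + w) u₀ ≤ ρ u₀ / 50 := by
        calc dist (u + w) u₀ ≤ dist (u + w) u + dist u u₀ := dist_triangle _ _ _
          _ ≤ ρ u₀/100 + ρ u₀/100 := add_le_add (by rw [hdw]; exact hw.le) hdu.le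
          _ = ρ u₀ / 50 := by ring
      linarith
    have hballm : ∀ z, dist z m < ρ u₀/10 → z ∈ 𝔄 := by
      intro z hz
      apply hballsub u₀ hu₀
      calc dist z u₀ ≤ dist z m + dist m u₀ := dist_triangle _ _ _
        _ < ρ u₀/10 + ρ u₀/100 := add_lt_add_of_lt_of_le hz hmu₀
        _ < ρ u₀ := by linarith
    have hd1 : dist (u + w) u₀ < ρ u₀ / 10 := by
      calc dist (u + w) u₀ ≤ dist (u + w) u + dist u u₀ := dist_triangle _ _ _
        _ < ρ u₀/100 + ρ u₀/100 := add_lt_add (by rw [hdw]; exact hw) hdu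
        _ < ρ u₀/10 := by linarith
    have hd2 : dist u (u₀ + w) < ρ u₀ / 10 := by
      calc dist u (u₀ + w) ≤ dist u u₀ + dist u₀ (u₀ + w) := dist_triangle _ _ _
        _ < ρ u₀/100 + ρ u₀/100 := by
            apply add_lt_add hdu
            rw [dist_comm, hdw]; exact hw
        _ < ρ u₀/10 := by linarith
    have hmp1 := hmidpt (u + w) hx1 u₀ hu₀ (ρ u₀/10) hd1 hballm
    have hmp2 := hmidpt u hu (u₀ + w) hy2 (ρ u₀/10) hd2 (by rw [← hmid_eq]; exact hballm)
    rw [← hmdef] at hmp1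
    rw [← hmid_eq] at hmp2
    have hmegq : midpoint ℝ (T (u+w)) (T u₀) = midpoint ℝ (T u) (T (u₀ + w)) := by
      rw [← hmp1, hmp2]
    calc T (u + w) + T u₀ = midpoint ℝ (T (u+w)) (T u₀) + midpoint ℝ (T (u+w)) (T u₀) :=
          (midpoint_add_self ℝ _ _).symm
      _ = midpoint ℝ (T u) (T (u₀ + w)) + midpoint ℝ (T u) (T (u₀ + w)) := by rw [hmegq]
      _ = T u + T (u₀ + w) := midpoint_add_self ℝ _ _
  -- local constancy of the displacement
  have hconst : ∀ u₀ ∈ 𝔄, ∀ u ∈ 𝔄, dist u u₀ < ρ u₀/200 →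
      T (u + a) - T u = T (u₀ + a) - T u₀ := by
    intro u₀ hu₀ u hu hdu
    have hρ₀ := hρpos u₀ hu₀
    obtain ⟨N₀, hN₀⟩ := exists_nat_gt (‖a‖ * 100 / ρ u₀)
    set N : ℕ := N₀ + 1 with hN
    have hNpos : (0:ℝ) < N := by positivity
    have hNgt : ‖a‖ * 100 / ρ u₀ < N := by
      calc ‖a‖ * 100 / ρ u₀ < N₀ := hN₀
        _ ≤ N := by exact_mod_cast Nat.le_succ N₀
    have hstep : ‖a‖ / N < ρ u₀ / 100 := by
      rw [div_lt_div_iff₀ hNpos (by norm_num : (0:ℝ) < 100)]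
      rw [div_lt_iff₀ hρ₀] at hNgt
      nlinarith
    have hkey : ∀ k : ℕ, k ≤ N →
        T (u + ((k:ℝ)/N) • a) - T (u₀ + ((k:ℝ)/N) • a) = T u - T u₀ := by
      intro k
      induction k with
      | zero => intro _; norm_num
      | succ k ih =>
        intro hk
        have hIH := ih (Nat.le_of_succ_le hk)
        have hp : u₀ + ((k:ℝ)/N) • a ∈ 𝔄 := hflowMem _ hu₀ _
        have hu' : u + ((k:ℝ)/N) • a ∈ 𝔄 := hflowMem _ hu _
        have hρp : ρ (u₀ + ((k:ℝ)/N) • a) = ρ u₀ := hρtrans u₀ _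
        have hdist' : dist (u + ((k:ℝ)/N) • a) (u₀ + ((k:ℝ)/N) • a)
            < ρ (u₀ + ((k:ℝ)/N) • a)/100 := by
          rw [hρp, dist_add_right]
          linarith
        have hwnorm : ‖((1:ℝ)/N) • a‖ < ρ (u₀ + ((k:ℝ)/N) • a)/100 := by
          rw [hρp, norm_smul, Real.norm_eq_abs, abs_of_pos (by positivity)]
          calc 1/(N:ℝ) * ‖a‖ = ‖a‖/N := by ring
            _ < ρ u₀/100 := hstep
        have hq := hquad _ hp _ hu' (((1:ℝ)/N) • a) hdist' hwnorm
        have hsum : ∀ x : A, x + ((k:ℝ)/N) • a + ((1:ℝ)/N) • a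
            = x + ((((k+1):ℕ):ℝ)/N) • a := by
          intro x
          rw [add_assoc, ← add_smul]
          congr 2
          push_cast
          ring
        rw [hsum, hsum] at hq
        have hstep2 : T (u + ((((k+1):ℕ):ℝ)/N) • a) - T (u₀ + ((((k+1):ℕ):ℝ)/N) • a)
            = T (u + ((k:ℝ)/N) • a) - T (u₀ + ((k:ℝ)/N) • a) := by
          rw [sub_eq_sub_iff_add_eq_add]
          exact hq
        rw [hstep2]
        exact hIH
    have hfin := hkey N le_rfl
    have hNN : ((N:ℝ)/N) • a = a := by
      rw [div_self (ne_of_gt hNpos), one_smul]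
    rw [hNN] at hfin
    rw [sub_eq_sub_iff_add_eq_add] at hfin ⊢
    rw [hfin]
    abel
  -- global displacement on the principal component of 𝔄
  set d : B := T (1 + a) - T 1 with hd
  have hdisp : ∀ u ∈ connectedComponentIn 𝔄 (1:A), T (u + a) - T u = d := by
    intro u hu
    set U1 : Set A := {v | v ∈ 𝔄 ∧ T (v + a) - T v = d} with hU1
    set U2 : Set A := {v | v ∈ 𝔄 ∧ T (v + a) - T v ≠ d} with hU2
    have hU1open : IsOpen U1 := by
      rw [Metric.isOpen_iff]
      rintro v ⟨hv, hP⟩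
      refine ⟨ρ v / 200, by have := hρpos v hv; positivity, ?_⟩
      intro z hz
      rw [Metric.mem_ball] at hz
      have hz𝔄 : z ∈ 𝔄 := hballsub v hv z (lt_of_lt_of_le hz (by linarith [hρpos v hv]))
      refine ⟨hz𝔄, ?_⟩
      rw [hconst v hv z hz𝔄 hz]
      exact hP
    have hU2open : IsOpen U2 := by
      rw [Metric.isOpen_iff]
      rintro v ⟨hv, hP⟩
      refine ⟨ρ v / 200, by have := hρpos v hv; positivity, ?_⟩
      intro z hz
      rw [Metric.mem_ball] at hz
      have hz𝔄 : z ∈ 𝔄 := hballsub v hv z (lt_of_lt_of_le hz (by linarith [hρpos v hv]))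
      refine ⟨hz𝔄, ?_⟩
      rw [hconst v hv z hz𝔄 hz]
      exact hP
    by_contra hne
    have hcover : connectedComponentIn 𝔄 (1:A) ⊆ U1 ∪ U2 := by
      intro z hz
      have hz𝔄 : z ∈ 𝔄 := connectedComponentIn_subset _ _ hz
      by_cases h : T (z + a) - T z = d
      · exact Or.inl ⟨hz𝔄, h⟩
      · exact Or.inr ⟨hz𝔄, h⟩
    have h1 : (connectedComponentIn 𝔄 (1:A) ∩ U1).Nonempty :=
      ⟨1, mem_connectedComponentIn h𝔄one, h𝔄one, by rw [hd]⟩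
    have h2 : (connectedComponentIn 𝔄 (1:A) ∩ U2).Nonempty :=
      ⟨u, hu, connectedComponentIn_subset _ _ hu, hne⟩
    obtain ⟨z, _, hz1, hz2⟩ := isPreconnected_connectedComponentIn U1 U2 hU1open hU2open
      hcover h1 h2
    exact hz2.2 hz1.2
  -- continuous structure of T and S
  have hcontT : ContinuousOn T 𝔄 := by
    apply LipschitzOnWith.continuousOn (K := 1)
    apply LipschitzOnWith.of_dist_le_mul
    intro x hx y hy
    rw [hisoD x hx y hy, NNReal.coe_one, one_mul]
  have hSiso : ∀ p ∈ 𝔅, ∀ q ∈ 𝔅, dist (S p) (S q) = dist p q :=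
    giso 𝔄 𝔅 T S hmaps hgV hisoD hgf hfg
  have hcontS : ContinuousOn S 𝔅 := by
    apply LipschitzOnWith.continuousOn (K := 1)
    apply LipschitzOnWith.of_dist_le_mul
    intro x hx y hy
    rw [hSiso x hx y hy, NNReal.coe_one, one_mul]
  set b₁ : B := T 1 with hb₁
  have hb₁mem : b₁ ∈ 𝔅 := hmaps h𝔄one
  -- the component of b₁ in 𝔅 is covered by T of the component of 1 in 𝔄
  have hSA0sub : ∀ y ∈ connectedComponentIn 𝔅 b₁, S y ∈ connectedComponentIn 𝔄 (1:A) := by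
    intro y hy
    have hpc : IsPreconnected (S '' connectedComponentIn 𝔅 b₁) :=
      isPreconnected_connectedComponentIn.image _
        (hcontS.mono (connectedComponentIn_subset _ _))
    have hsub : S '' connectedComponentIn 𝔅 b₁ ⊆ 𝔄 := by
      rintro _ ⟨z, hz, rfl⟩
      exact hgV (connectedComponentIn_subset _ _ hz)
    have hmem1 : (1:A) ∈ S '' connectedComponentIn 𝔅 b₁ :=
      ⟨b₁, mem_connectedComponentIn hb₁mem, hgf 1 h𝔄one⟩
    exact hpc.subset_connectedComponentIn hmem1 hsub ⟨y, hy, rfl⟩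
  -- every element of the component of b₁ stays invertible after adding d
  have hyd : ∀ y ∈ connectedComponentIn 𝔅 b₁, y + d ∈ 𝔅 := by
    intro y hy
    have hy𝔅 : y ∈ 𝔅 := connectedComponentIn_subset _ _ hy
    have hu : S y ∈ connectedComponentIn 𝔄 (1:A) := hSA0sub y hy
    have hu𝔄 : S y ∈ 𝔄 := connectedComponentIn_subset _ _ hu
    have h1 := hdisp (S y) hu
    have h2 : T (S y + a) = T (S y) + d := by
      rw [← h1]; abel
    have h3 : S y + a ∈ 𝔄 := by
      have := hflowMem (S y) hu𝔄 1
      rwa [one_smul] at this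
    have h4 := hmaps h3
    rw [h2, hfg y hy𝔅] at h4
    exact h4
  -- multiplication by b₁ maps the principal component of B into the component of b₁
  have hc' : ∀ w ∈ connectedComponentIn (uSet B) (1:B),
      b₁ * w ∈ connectedComponentIn 𝔅 b₁ := by
    intro w hw
    have hsub : ((b₁ * ·) '' connectedComponentIn (uSet B) 1) ⊆ 𝔅 := by
      rintro _ ⟨y, hy, rfl⟩
      exact h𝔅mul _ hb₁mem _
        (princComp_subset 𝔅 h𝔅unit h𝔅one h𝔅mul h𝔅inv h𝔅open hy)
    have hpc : IsPreconnected ((b₁ * ·) '' connectedComponentIn (uSet B) 1) :=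
      isPreconnected_connectedComponentIn.image _ (by fun_prop)
    have hmem : b₁ ∈ ((b₁ * ·) '' connectedComponentIn (uSet B) 1) :=
      ⟨1, mem_connectedComponentIn (show (1:B) ∈ uSet B from isUnit_one), mul_one b₁⟩
    exact hpc.subset_connectedComponentIn hmem hsub ⟨w, hw, rfl⟩
  -- the candidate radical element of B
  obtain ⟨β, hβ⟩ := h𝔅unit b₁ hb₁mem
  set c : B := (↑β⁻¹ : B) * d with hcdef
  have hcunit : ∀ v ∈ connectedComponentIn (uSet B) (1:B), IsUnit (1 + v * c) := by
    intro v hv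
    obtain ⟨ν, rfl⟩ := mem_uSet_iff.mp (connectedComponentIn_subset _ _ hv)
    have hνinv : ((ν⁻¹ : Bˣ) : B) ∈ connectedComponentIn (uSet B) 1 := by
      have := princComp_inv hv
      rwa [Ring.inverse_unit] at this
    have hyB : b₁ * ↑ν⁻¹ + d ∈ 𝔅 := hyd _ (hc' _ hνinv)
    have h1 : (↑β⁻¹ : B) * (b₁ * ↑ν⁻¹) = ↑ν⁻¹ := by
      rw [← hβ, ← mul_assoc, Units.inv_mul, one_mul]
    have halg : (1:B) + ↑ν * c = ↑ν * ((↑β⁻¹ : B) * (b₁ * ↑ν⁻¹ + d)) := by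
      rw [mul_add (↑β⁻¹ : B), h1, mul_add, Units.mul_inv, hcdef]
    rw [halg]
    exact ν.isUnit.mul ((β⁻¹).isUnit.mul (h𝔅unit _ hyB))
  have hcjac : c ∈ Ideal.jacobson (⊥ : Ideal B) := by
    apply Submodule.mem_sInf.mpr
    rintro J ⟨_, hJmax⟩
    exact mem_maximal_of_isUnit_add J hJmax c hcunit
  rw [hBss] at hcjac
  have hc0 : c = 0 := (Submodule.mem_bot B).mp hcjac
  have hd0 : d = 0 := by
    have h2 : d = ↑β * c := by
      rw [hcdef, ← mul_assoc, Units.mul_inv, one_mul]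
    rw [h2, hc0, mul_zero]
  have h1a : (1:A) + a ∈ 𝔄 := by
    have := hflowMem 1 h𝔄one 1
    rwa [one_smul] at this
  have hnorm := hiso _ h1a _ h𝔄one
  rw [show (1:A) + a - 1 = a by abel] at hnorm
  have : ‖a‖ = 0 := by
    rw [← hnorm, ← hd, hd0, norm_zero]
  exact norm_eq_zero.mp this
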